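/- arXiv:1811.11574 — 6 statements merged into one kernel-verified Lean document; each statement's English description precedes it below -/
import Mathlib

section
/- Let n ≥ 2 be an integer, H ∈ ℝ, T > 0, and let sn : (0,T) → ℝ be twice differentiable with sn > 0 and sn'' = −H·sn on (0,T); set μ(r) := (n−1)·sn'(r)/sn(r). If λ : (0,T) → ℝ is differentiable and g : (0,T) → ℝ is a function such that λ'(r) ≤ −λ(r)²/(n−1) − (n−1)·H + g(r) for all r ∈ (0,T), then d/dr [ sn(r)² · (λ(r) − μ(r)) ] ≤ sn(r)² · g(r) for all r ∈ (0,T). -/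
open Set

/-- If λ satisfies the Riccati-type inequality λ' ≤ −λ²/(n−1) − (n−1)H + g, then
d/dr [ sn(r)²·(λ(r) − μ(r)) ] ≤ sn(r)²·g(r), where μ = (n−1)·sn'/sn. -/
theorem stmt_1 (n : ℕ) (hn : 2 ≤ n) (H T : ℝ) (hT : 0 < T)
    (sn sn' sn'' lam lam' g : ℝ → ℝ)
    (hsn : ∀ r ∈ Ioo 0 T, HasDerivAt sn (sn' r) r)
    (hsn' : ∀ r ∈ Ioo 0 T, HasDerivAt sn' (sn'' r) r)
    (hpos : ∀ r ∈ Ioo 0 T, 0 < sn r)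
    (hode : ∀ r ∈ Ioo 0 T, sn'' r = -H * sn r)
    (hlam : ∀ r ∈ Ioo 0 T, HasDerivAt lam (lam' r) r)
    (hineq : ∀ r ∈ Ioo 0 T,
      lam' r ≤ -(lam r) ^ 2 / ((n : ℝ) - 1) - ((n : ℝ) - 1) * H + g r) :
    ∀ r ∈ Ioo 0 T,
      deriv (fun s => sn s ^ 2 * (lam s - ((n : ℝ) - 1) * sn' s / sn s)) r ≤
        sn r ^ 2 * g r := by
  intro r hr
  have hn1 : (0:ℝ) < (n:ℝ) - 1 := by
    have : (2:ℝ) ≤ (n:ℝ) := by exact_mod_cast hn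
    linarith
  have hsp := hpos r hr
  have hG : HasDerivAt (fun s => sn s ^ 2 * lam s - ((n:ℝ)-1) * (sn s * sn' s))
      (2 * sn r * sn' r * lam r + sn r ^ 2 * lam' r
        - ((n:ℝ)-1) * (sn' r * sn' r + sn r * sn'' r)) r := by
    have h1 := ((hsn r hr).pow 2).mul (hlam r hr)
    have h2 := ((hsn r hr).mul (hsn' r hr)).const_mul ((n:ℝ)-1)
    have h3 := h1.sub h2
    refine h3.congr_deriv ?_
    simp only [Pi.pow_apply]
    push_cast
    ring
  have heq : (fun s => sn s ^ 2 * (lam s - ((n:ℝ)-1) * sn' s / sn s))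
      =ᶠ[nhds r] (fun s => sn s ^ 2 * lam s - ((n:ℝ)-1) * (sn s * sn' s)) := by
    filter_upwards [isOpen_Ioo.mem_nhds hr] with s hs
    have h := (hpos s hs).ne'
    field_simp
  have hD := hG.congr_of_eventuallyEq heq
  rw [hD.deriv, hode r hr]
  have hi := hineq r hr
  have hi2 : ((n:ℝ)-1) * lam' r ≤ -(lam r)^2 - ((n:ℝ)-1)^2*H + ((n:ℝ)-1) * g r := by
    have h := mul_le_mul_of_nonneg_left hi hn1.le
    have hne : ((n:ℝ)-1) ≠ 0 := hn1.ne'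
    field_simp at h
    nlinarith [h]
  have hsq := sq_nonneg (sn r * lam r - ((n:ℝ)-1) * sn' r)
  nlinarith [mul_le_mul_of_nonneg_left hi2 (sq_nonneg (sn r)), hsq, hn1, sq_nonneg (sn r)]
end

section
/- Let n ≥ 2 be an integer, δ > 0, K ≥ 0, H ∈ ℝ, T > 0. Let sn : [0,T] → ℝ be C² with sn'' = −H·sn, sn(0) = 0, sn'(0) = 1, sn(r) > 0 for r ∈ (0,T], and (sn²)''(r) ≥ 0 for all r ∈ [0,T]. Let f : [0,T] → ℝ be C² with |f(r)| ≤ K for all r, and let λ : (0,T] → ℝ be differentiable with lim_{r→0⁺} sn(r)²·λ(r) = 0 and λ'(r) ≤ −λ(r)²/((n−1)·δ) − (n−1)·δ·H + f''(r) for all r ∈ (0,T]. Then for every r ∈ (0,T]: λ(r) − f'(r) ≤ δ·(1 + 4K/(δ·(n−1)))·(n−1)·sn'(r)/sn(r). -/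
open Set

/-- ODE form of the extended mean curvature comparison theorem. -/
theorem stmt_2 (n : ℕ) (hn : 2 ≤ n) (δ K H T : ℝ) (hδ : 0 < δ) (hK : 0 ≤ K) (hT : 0 < T)
    (sn sn' sn'' f f' f'' lam lam' : ℝ → ℝ)
    (hsn : ∀ r ∈ Icc 0 T, HasDerivAt sn (sn' r) r)
    (hsn' : ∀ r ∈ Icc 0 T, HasDerivAt sn' (sn'' r) r)
    (hsncont : ContinuousOn sn'' (Icc 0 T))
    (hode : ∀ r ∈ Icc 0 T, sn'' r = -H * sn r)
    (hsn0 : sn 0 = 0) (hsn'0 : sn' 0 = 1)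
    (hpos : ∀ r ∈ Ioc 0 T, 0 < sn r)
    (hconv : ∀ r ∈ Icc 0 T, 0 ≤ 2 * (sn' r ^ 2 + sn r * sn'' r))
    (hf : ∀ r ∈ Icc 0 T, HasDerivAt f (f' r) r)
    (hf' : ∀ r ∈ Icc 0 T, HasDerivAt f' (f'' r) r)
    (hfcont : ContinuousOn f'' (Icc 0 T))
    (hfK : ∀ r ∈ Icc 0 T, |f r| ≤ K)
    (hlam : ∀ r ∈ Ioc 0 T, HasDerivAt lam (lam' r) r)
    (hlim : Filter.Tendsto (fun r => sn r ^ 2 * lam r) (nhdsWithin 0 (Ioi 0)) (nhds 0))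
    (hric : ∀ r ∈ Ioc 0 T,
      lam' r ≤ -(lam r) ^ 2 / (((n : ℝ) - 1) * δ) - ((n : ℝ) - 1) * δ * H + f'' r) :
    ∀ r ∈ Ioc 0 T,
      lam r - f' r ≤ δ * (1 + 4 * K / (δ * ((n : ℝ) - 1))) * ((n : ℝ) - 1) * sn' r / sn r := by
  have hn1 : (1:ℝ) ≤ (n:ℝ) - 1 := by
    have : (2:ℝ) ≤ (n:ℝ) := by exact_mod_cast hn
    linarith
  set c : ℝ := ((n : ℝ) - 1) * δ with hc
  have hcpos : 0 < c := mul_pos (by linarith) hδ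
  have hsub : Ioc (0:ℝ) T ⊆ Icc 0 T := Ioc_subset_Icc_self
  have h0T : (0:ℝ) ∈ Icc (0:ℝ) T := ⟨le_refl _, hT.le⟩
  -- the comparison function
  set G : ℝ → ℝ := fun x => sn x * sn x * lam x - c * (sn x * sn' x)
      - sn x * sn x * f' x + 2 * (sn x * sn' x * f x) - 2 * K * (sn x * sn' x) with hGdef
  -- candidate derivative of G
  set D : ℝ → ℝ := fun x => ((sn' x * sn x + sn x * sn' x) * lam x + sn x * sn x * lam' x)
        - c * ((sn'' x * sn x + sn' x * sn'' x * 0) + (sn' x * sn' x + sn x * sn'' x) - sn'' x * sn x - sn' x * sn'' x * 0)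
        - ((sn' x * sn x + sn x * sn' x) * f' x + sn x * sn x * f'' x)
        + 2 * (((sn' x * sn' x + sn x * sn'' x) * f x + sn x * sn' x * f' x))
        - 2 * K * (sn' x * sn' x + sn x * sn'' x) with hDdef
  have hGd : ∀ x ∈ Ioc 0 T, HasDerivAt G (D x) x := by
    intro x hx
    have hx' := hsub hx
    have hs := hsn x hx'
    have hs' := hsn' x hx'
    have hfx := hf x hx'
    have hf'x := hf' x hx'
    have hl := hlam x hx
    have h1 : HasDerivAt (fun y => sn y * sn y * lam y)
        ((sn' x * sn x + sn x * sn' x) * lam x + sn x * sn x * lam' x) x := (hs.mul hs).mul hl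
    have h2 : HasDerivAt (fun y => sn y * sn' y) (sn' x * sn' x + sn x * sn'' x) x := hs.mul hs'
    have h2c : HasDerivAt (fun y => c * (sn y * sn' y)) (c * (sn' x * sn' x + sn x * sn'' x)) x :=
      h2.const_mul c
    have h3 : HasDerivAt (fun y => sn y * sn y * f' y)
        ((sn' x * sn x + sn x * sn' x) * f' x + sn x * sn x * f'' x) x := (hs.mul hs).mul hf'x
    have h4 : HasDerivAt (fun y => 2 * (sn y * sn' y * f y))
        (2 * ((sn' x * sn' x + sn x * sn'' x) * f x + sn x * sn' x * f' x)) x :=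
      (h2.mul hfx).const_mul 2
    have h5 : HasDerivAt (fun y => 2 * K * (sn y * sn' y))
        (2 * K * (sn' x * sn' x + sn x * sn'' x)) x := h2.const_mul (2 * K)
    have := (((h1.sub h2c).sub h3).add h4).sub h5
    exact this.congr_deriv (by simp only [hDdef]; ring)
  -- the derivative is nonpositive on (0, T]
  have hDle : ∀ x ∈ Ioc 0 T, D x ≤ 0 := by
    intro x hx
    have hx' := hsub hx
    have hodex := hode x hx'
    have hconvx : 0 ≤ sn' x * sn' x + sn x * sn'' x := by
      have := hconv x hx'
      nlinarith [this]
    have hfx1 : f x ≤ K := (abs_le.mp (hfK x hx')).2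
    have hricx := hric x hx
    have hsq : 0 ≤ sn x * sn x := mul_self_nonneg _
    have hmul : sn x * sn x * lam' x
        ≤ sn x * sn x * (-(lam x) ^ 2 / c - c * H + f'' x) :=
      mul_le_mul_of_nonneg_left hricx hsq
    -- completing the square
    have key : 2 * (sn x * sn' x) * lam x + sn x * sn x * (-(lam x) ^ 2 / c)
        ≤ c * (sn' x * sn' x) := by
      have h1 : 0 ≤ (sn x * lam x - c * sn' x) ^ 2 / c :=
        div_nonneg (sq_nonneg _) hcpos.le
      have h2 : (sn x * lam x - c * sn' x) ^ 2 / c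
          = sn x * sn x * ((lam x) ^ 2 / c) - 2 * (sn x * sn' x) * lam x
            + c * (sn' x * sn' x) := by
        field_simp
        ring
      have h3 : sn x * sn x * (-(lam x) ^ 2 / c) = -(sn x * sn x * ((lam x) ^ 2 / c)) := by
        ring
      linarith [h1, h2.ge, h2.le]
    -- product bound
    have hprod : (sn' x * sn' x + sn x * sn'' x) * (2 * f x - 2 * K) ≤ 0 :=
      mul_nonpos_of_nonneg_of_nonpos hconvx (by linarith)
    -- substitute the ODE
    have e3 : c * (sn x * sn'' x) = -(c * H * (sn x * sn x)) := by rw [hodex]; ring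
    have hm : sn x * sn x * (-(lam x) ^ 2 / c - c * H + f'' x)
        = sn x * sn x * (-(lam x) ^ 2 / c) - c * H * (sn x * sn x) + sn x * sn x * f'' x := by
      ring
    simp only [hDdef]
    nlinarith [hmul, key, hprod, e3, hm.le, hm.ge]
  -- G is antitone on [s, T] for each s > 0, hence on (0, T]
  have hanti : ∀ x ∈ Ioc 0 T, ∀ y ∈ Ioc 0 T, x ≤ y → G y ≤ G x := by
    intro x hx y hy hxy
    have hsubset : Icc x y ⊆ Ioc 0 T := fun z hz => ⟨lt_of_lt_of_le hx.1 hz.1, le_trans hz.2 hy.2⟩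
    have hcont : ContinuousOn G (Icc x y) := fun z hz =>
      (hGd z (hsubset hz)).continuousAt.continuousWithinAt
    have hdiff : DifferentiableOn ℝ G (interior (Icc x y)) := by
      intro z hz
      rw [interior_Icc] at hz
      exact (hGd z (hsubset (Ioo_subset_Icc_self hz))).differentiableAt.differentiableWithinAt
    have hder : ∀ z ∈ interior (Icc x y), deriv G z ≤ 0 := by
      intro z hz
      rw [interior_Icc] at hz
      have hz' := hsubset (Ioo_subset_Icc_self hz)
      rw [(hGd z hz').deriv]
      exact hDle z hz'
    exact antitoneOn_of_deriv_nonpos (convex_Icc x y) hcont hdiff hder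
      ⟨le_refl x, hxy⟩ ⟨hxy, le_refl y⟩ hxy
  -- G tends to 0 at 0⁺
  have hsnc : Filter.Tendsto sn (nhdsWithin 0 (Ioi 0)) (nhds 0) := by
    have := (hsn 0 h0T).continuousAt.tendsto
    rw [hsn0] at this
    exact this.mono_left nhdsWithin_le_nhds
  have hsn'c : Filter.Tendsto sn' (nhdsWithin 0 (Ioi 0)) (nhds 1) := by
    have := (hsn' 0 h0T).continuousAt.tendsto
    rw [hsn'0] at this
    exact this.mono_left nhdsWithin_le_nhds
  have hfc : Filter.Tendsto f (nhdsWithin 0 (Ioi 0)) (nhds (f 0)) :=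
    (hf 0 h0T).continuousAt.tendsto.mono_left nhdsWithin_le_nhds
  have hf'c : Filter.Tendsto f' (nhdsWithin 0 (Ioi 0)) (nhds (f' 0)) :=
    (hf' 0 h0T).continuousAt.tendsto.mono_left nhdsWithin_le_nhds
  have hlim' : Filter.Tendsto (fun x => sn x * sn x * lam x) (nhdsWithin 0 (Ioi 0)) (nhds 0) := by
    have : (fun x => sn x * sn x * lam x) = fun x => sn x ^ 2 * lam x := by
      funext x; ring
    rw [this]; exact hlim
  have hGlim : Filter.Tendsto G (nhdsWithin 0 (Ioi 0)) (nhds 0) := by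
    have t2 : Filter.Tendsto (fun x => c * (sn x * sn' x)) (nhdsWithin 0 (Ioi 0))
        (nhds (c * (0 * 1))) := (hsnc.mul hsn'c).const_mul c
    have t3 : Filter.Tendsto (fun x => sn x * sn x * f' x) (nhdsWithin 0 (Ioi 0))
        (nhds (0 * 0 * f' 0)) := (hsnc.mul hsnc).mul hf'c
    have t4 : Filter.Tendsto (fun x => 2 * (sn x * sn' x * f x)) (nhdsWithin 0 (Ioi 0))
        (nhds (2 * (0 * 1 * f 0))) := ((hsnc.mul hsn'c).mul hfc).const_mul 2
    have t5 : Filter.Tendsto (fun x => 2 * K * (sn x * sn' x)) (nhdsWithin 0 (Ioi 0))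
        (nhds (2 * K * (0 * 1))) := (hsnc.mul hsn'c).const_mul (2 * K)
    have := ((((hlim'.sub t2).sub t3).add t4).sub t5)
    simpa using this
  -- hence G ≤ 0 on (0, T]
  have hGle : ∀ r ∈ Ioc 0 T, G r ≤ 0 := by
    intro r hr
    refine ge_of_tendsto hGlim ?_
    have hmem : Ioo (0:ℝ) r ∈ nhdsWithin (0:ℝ) (Ioi 0) :=
      Ioo_mem_nhdsGT_of_mem ⟨le_refl 0, hr.1⟩
    filter_upwards [hmem] with s hs
    exact hanti s ⟨hs.1, le_trans hs.2.le hr.2⟩ r hr hs.2.le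
  -- sn * sn' is nonnegative on [0, T]
  have hssnn : ∀ r ∈ Icc 0 T, 0 ≤ sn r * sn' r := by
    have hmono : MonotoneOn (fun x => sn x * sn' x) (Icc 0 T) := by
      apply monotoneOn_of_deriv_nonneg (convex_Icc 0 T)
      · exact fun z hz => ((hsn z hz).mul (hsn' z hz)).continuousAt.continuousWithinAt
      · intro z hz
        rw [interior_Icc] at hz
        exact ((hsn z (Ioo_subset_Icc_self hz)).mul
          (hsn' z (Ioo_subset_Icc_self hz))).differentiableAt.differentiableWithinAt
      · intro z hz
        rw [interior_Icc] at hz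
        have hz' := Ioo_subset_Icc_self hz
        rw [show deriv (fun x => sn x * sn' x) z = _ from ((hsn z hz').mul (hsn' z hz')).deriv]
        have := hconv z hz'
        nlinarith [this]
    intro r hr
    have := hmono h0T hr hr.1
    simpa [hsn0] using this
  -- conclude
  intro r hr
  have hr' := hsub hr
  have hsnr : 0 < sn r := hpos r hr
  have hss : 0 ≤ sn r * sn' r := hssnn r hr'
  have hfr : -K ≤ f r := (abs_le.mp (hfK r hr')).1
  have hGr : G r ≤ 0 := hGle r hr
  -- sn r * sn r * (lam r - f' r) ≤ (c + 4K) * (sn r * sn' r)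
  have hmain : sn r * sn r * (lam r - f' r) ≤ (c + 4 * K) * (sn r * sn' r) := by
    have h1 : 0 ≤ (sn r * sn' r) * (f r + K) := mul_nonneg hss (by linarith)
    simp only [hGdef] at hGr
    nlinarith [hGr, h1]
  have hRHS : δ * (1 + 4 * K / (δ * ((n : ℝ) - 1))) * ((n : ℝ) - 1) * sn' r / sn r
      = (c + 4 * K) * sn' r / sn r := by
    rw [hc]
    field_simp
  rw [hRHS, le_div_iff₀ hsnr]
  have h2 : (lam r - f' r) * sn r * sn r ≤ (c + 4 * K) * sn' r * sn r := by
    linarith [hmain]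
  exact le_of_mul_le_mul_right (by linarith [h2]) hsnr
end

section
/- Let b > 0, R > 0, δ₁ > 0, and C > 2δ₁; set D := 2 − C/δ₁ (so D < 0). Define G : (0,R] → ℝ by G(r) = (b/(2C)) · ( r² + (2/D − 1)·R² − (2/D)·R^{2−D}·r^D ). Then: (i) δ₁·G''(r) + (C − δ₁)·G'(r)/r = b for all r ∈ (0,R); (ii) G(R) = 0; (iii) G'(r) < 0 for all r ∈ (0,R); (iv) G(r) > 0 for all r ∈ (0,R). -/
open Set

/-- Properties of the explicit flat-case barrier function of the extended
quantitative maximal principle. -/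
theorem stmt_8 (b R δ₁ C D : ℝ) (hb : 0 < b) (hR : 0 < R) (hδ : 0 < δ₁)
    (hC : 2 * δ₁ < C) (hD : D = 2 - C / δ₁)
    (G : ℝ → ℝ)
    (hG : ∀ r : ℝ, G r = b / (2 * C) * (r ^ 2 + (2 / D - 1) * R ^ 2 - (2 / D) * R ^ (2 - D) * r ^ D)) :
    (∀ r ∈ Ioo 0 R, δ₁ * deriv (deriv G) r + (C - δ₁) * deriv G r / r = b) ∧
    G R = 0 ∧
    (∀ r ∈ Ioo 0 R, deriv G r < 0) ∧
    (∀ r ∈ Ioo 0 R, 0 < G r) := by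
  have hC0 : 0 < C := by linarith
  have hDneg : D < 0 := by
    rw [hD, sub_neg, lt_div_iff₀ hδ]; linarith
  have hD0 : D ≠ 0 := hDneg.ne
  have hδD : δ₁ * D = 2 * δ₁ - C := by
    rw [hD]; field_simp
  set K := b / (2 * C) with hK
  have hKpos : 0 < K := div_pos hb (by linarith)
  have hGfun : G = fun r => K * (r ^ 2 + (2 / D - 1) * R ^ 2 - (2 / D) * R ^ (2 - D) * r ^ D) :=
    funext hG
  set X := R ^ (2 - D) with hX
  have hXpos : 0 < X := Real.rpow_pos_of_pos hR _
  -- first derivative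
  have hd1 : ∀ r : ℝ, 0 < r →
      HasDerivAt G (K * (2 * r - 2 / D * X * (D * r ^ (D - 1)))) r := by
    intro r hr
    rw [hGfun]
    have h1 : HasDerivAt (fun r : ℝ => r ^ 2) (2 * r) r := by
      simpa using hasDerivAt_pow 2 r
    have h2 : HasDerivAt (fun r : ℝ => r ^ D) (D * r ^ (D - 1)) r :=
      Real.hasDerivAt_rpow_const (Or.inl hr.ne')
    have := ((h1.add_const ((2 / D - 1) * R ^ 2)).sub (h2.const_mul (2 / D * X))).const_mul K
    exact this
  have hderiv1 : ∀ r : ℝ, 0 < r →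
      deriv G r = K * (2 * r - 2 / D * X * (D * r ^ (D - 1))) := fun r hr => (hd1 r hr).deriv
  -- second derivative
  have hd2 : ∀ r : ℝ, 0 < r →
      deriv (deriv G) r = K * (2 - 2 / D * X * (D * ((D - 1) * r ^ (D - 2)))) := by
    intro r hr
    have hev : deriv G =ᶠ[nhds r] fun x => K * (2 * x - 2 / D * X * (D * x ^ (D - 1))) := by
      filter_upwards [Ioi_mem_nhds hr] with x hx
      exact hderiv1 x hx
    rw [hev.deriv_eq]
    have h2 : HasDerivAt (fun x : ℝ => x ^ (D - 1)) ((D - 1) * r ^ (D - 1 - 1)) r :=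
      Real.hasDerivAt_rpow_const (Or.inl hr.ne')
    have h1 : HasDerivAt (fun x : ℝ => 2 * x) 2 r := by
      simpa using (hasDerivAt_id r).const_mul 2
    have := (h1.sub ((h2.const_mul D).const_mul (2 / D * X))).const_mul K
    have heq : D - 1 - 1 = D - 2 := by ring
    rw [heq] at this
    exact this.deriv
  -- pointwise negativity of the derivative
  have hneg : ∀ r ∈ Ioo (0:ℝ) R, deriv G r < 0 := by
    intro r hr
    obtain ⟨hr0, hrR⟩ := hr
    rw [hderiv1 r hr0]
    have hy : (0:ℝ) < r ^ (D - 1) := Real.rpow_pos_of_pos hr0 _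
    have hr' : r = r ^ (2 - D) * r ^ (D - 1) := by
      rw [← Real.rpow_add hr0]
      norm_num
    have hlt : r ^ (2 - D) < X := by
      rw [hX]
      exact Real.rpow_lt_rpow hr0.le hrR (by linarith)
    have key : 2 * r - 2 / D * X * (D * r ^ (D - 1)) < 0 := by
      have h2 : 2 / D * X * (D * r ^ (D - 1)) = 2 * X * r ^ (D - 1) := by
        field_simp
      rw [h2]
      nlinarith [mul_lt_mul_of_pos_right hlt hy]
    exact mul_neg_of_pos_of_neg hKpos key
  have hGR : G R = 0 := by
    have hRR : X * R ^ D = R ^ 2 := by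
      rw [hX, ← Real.rpow_add hR]
      norm_num
    rw [hG, mul_assoc (2 / D) X (R ^ D), hRR]
    ring
  refine ⟨?_, hGR, hneg, ?_⟩
  · -- the ODE
    intro r hr
    obtain ⟨hr0, hrR⟩ := hr
    rw [hderiv1 r hr0, hd2 r hr0]
    have hr' : r ^ (D - 1) = r ^ (D - 2) * r := by
      rw [← Real.rpow_add_one hr0.ne']
      ring_nf
    rw [hr', hK]
    have hr0' : r ≠ 0 := hr0.ne'
    field_simp
    linear_combination (-(X * r ^ (D - 2))) * hδD
  · -- positivity
    intro r hr
    obtain ⟨hr0, hrR⟩ := hr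
    have hanti : StrictAntiOn G (Icc r R) := by
      apply strictAntiOn_of_deriv_neg (convex_Icc r R)
      · intro x hx
        exact ((hd1 x (hr0.trans_le hx.1)).continuousAt).continuousWithinAt
      · intro x hx
        rw [interior_Icc] at hx
        exact hneg x ⟨hr0.trans hx.1, hx.2⟩
    have := hanti (left_mem_Icc.mpr hrR.le) (right_mem_Icc.mpr hrR.le) hrR
    rw [hGR] at this
    exact this
end

section
/- Let a > 0, κ > 0, b > 0, δ₁ > 0, and R > 0. Define G : (0,R] → ℝ by G(r) = (b/δ₁) · ∫_r^R ( ∫_r^t (sinh(a·t)/sinh(a·s))^κ ds ) dt. Then: (i) G'(r) = −(b/δ₁)·sinh(a·r)^{−κ}·∫_r^R sinh(a·t)^κ dt, which is negative for all r ∈ (0,R); (ii) δ₁·G''(r) + δ₁·κ·a·(cosh(a·r)/sinh(a·r))·G'(r) = b for all r ∈ (0,R); (iii) G(R) = 0; (iv) G(r) > 0 for all r ∈ (0,R). -/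
open Set MeasureTheory intervalIntegral

section Aux

variable (a κ R : ℝ)

/-- The inner antiderivative `Ψ`. -/
noncomputable def psiAux : ℝ → ℝ := fun r => ∫ s in R..r, Real.sinh (a * s) ^ (-κ)

variable {a κ R}

lemma sinh_pos' {x : ℝ} (ha : 0 < a) (hx : 0 < x) : 0 < Real.sinh (a * x) :=
  Real.sinh_pos_iff.mpr (mul_pos ha hx)

lemma contF (hκ : 0 < κ) : Continuous (fun s : ℝ => Real.sinh (a * s) ^ κ) :=
  (Real.continuous_sinh.comp (continuous_const.mul continuous_id)).rpow_const
    fun _ => Or.inr hκ.le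

lemma contPhi (ha : 0 < a) :
    ∀ x ∈ Ioi (0:ℝ), ContinuousAt (fun s : ℝ => Real.sinh (a * s) ^ (-κ)) x := by
  intro x hx
  exact ((Real.continuous_sinh.comp (continuous_const.mul continuous_id)).continuousAt).rpow_const
    (Or.inl (sinh_pos' ha hx).ne')

lemma phiIntegrable (ha : 0 < a) {u v : ℝ} (hu : 0 < u) (hv : 0 < v) :
    IntervalIntegrable (fun s : ℝ => Real.sinh (a * s) ^ (-κ)) volume u v := by
  have h0 : (0:ℝ) < u ⊓ v := lt_inf_iff.mpr ⟨hu, hv⟩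
  have hsub : uIcc u v ⊆ Ioi (0:ℝ) := fun x hx => h0.trans_le hx.1
  exact ((continuousOn_of_forall_continuousAt (contPhi ha)).mono hsub).intervalIntegrable

lemma psiHasDeriv (ha : 0 < a) (hR : 0 < R) {r : ℝ} (hr : 0 < r) :
    HasDerivAt (psiAux a κ R) (Real.sinh (a * r) ^ (-κ)) r :=
  integral_hasDerivAt_right (phiIntegrable ha hR hr)
    (ContinuousOn.stronglyMeasurableAtFilter isOpen_Ioi
      (continuousOn_of_forall_continuousAt (contPhi ha)) r hr)
    (contPhi ha r hr)

lemma psiContOn (ha : 0 < a) (hR : 0 < R) :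
    ContinuousOn (psiAux a κ R) (Ioi 0) := fun x hx =>
  ((psiHasDeriv ha hR hx).continuousAt).continuousWithinAt

lemma inner_eq (ha : 0 < a) (hR : 0 < R) {r t : ℝ} (hr : 0 < r) (ht : 0 < t) :
    (∫ s in r..t, (Real.sinh (a * t) / Real.sinh (a * s)) ^ κ)
      = Real.sinh (a * t) ^ κ * (psiAux a κ R t - psiAux a κ R r) := by
  have h2 : ∀ s ∈ uIcc r t, (Real.sinh (a * t) / Real.sinh (a * s)) ^ κ
      = Real.sinh (a * t) ^ κ * Real.sinh (a * s) ^ (-κ) := by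
    intro s hs
    have hs0 : 0 < s := (lt_inf_iff.mpr ⟨hr, ht⟩).trans_le hs.1
    rw [Real.div_rpow (sinh_pos' ha ht).le (sinh_pos' ha hs0).le,
        Real.rpow_neg (sinh_pos' ha hs0).le, div_eq_mul_inv]
  rw [intervalIntegral.integral_congr h2, intervalIntegral.integral_const_mul]
  congr 1
  exact (integral_interval_sub_left (phiIntegrable ha hR ht) (phiIntegrable ha hR hr)).symm

/-- rewriting of the double integral. -/
lemma G_eq (ha : 0 < a) (hκ : 0 < κ) (hR : 0 < R) {r : ℝ} (hr : 0 < r) :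
    (∫ t in r..R, ∫ s in r..t, (Real.sinh (a * t) / Real.sinh (a * s)) ^ κ)
      = (∫ t in r..R, Real.sinh (a * t) ^ κ * psiAux a κ R t)
        - psiAux a κ R r * ∫ t in r..R, Real.sinh (a * t) ^ κ := by
  have h0 : (0:ℝ) < r ⊓ R := lt_inf_iff.mpr ⟨hr, hR⟩
  have hsub : uIcc r R ⊆ Ioi (0:ℝ) := fun x hx => h0.trans_le hx.1
  have h1 : ∀ t ∈ uIcc r R,
      (∫ s in r..t, (Real.sinh (a * t) / Real.sinh (a * s)) ^ κ)
        = Real.sinh (a * t) ^ κ * (psiAux a κ R t - psiAux a κ R r) := by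
    intro t ht
    exact inner_eq ha hR hr (h0.trans_le ht.1)
  rw [intervalIntegral.integral_congr h1]
  have hint1 : IntervalIntegrable (fun t => Real.sinh (a * t) ^ κ * psiAux a κ R t)
      volume r R :=
    ((contF hκ).continuousOn.mul ((psiContOn ha hR).mono hsub)).intervalIntegrable
  have hint2 : IntervalIntegrable (fun t => Real.sinh (a * t) ^ κ * psiAux a κ R r)
      volume r R := ((contF hκ).intervalIntegrable r R).mul_const _
  simp only [mul_sub]
  rw [intervalIntegral.integral_sub hint1 hint2, intervalIntegral.integral_mul_const]
  ring

end Aux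

/-- Properties of the explicit negatively curved barrier function of the extended
quantitative maximal principle. -/
theorem stmt_9 (a κ b δ₁ R : ℝ) (ha : 0 < a) (hκ : 0 < κ) (hb : 0 < b) (hδ : 0 < δ₁)
    (hR : 0 < R)
    (G : ℝ → ℝ)
    (hG : ∀ r : ℝ, G r = b / δ₁ * ∫ t in r..R, ∫ s in r..t,
      (Real.sinh (a * t) / Real.sinh (a * s)) ^ κ) :
    (∀ r ∈ Ioo 0 R,
      deriv G r = -(b / δ₁) * Real.sinh (a * r) ^ (-κ) * ∫ t in r..R, Real.sinh (a * t) ^ κ) ∧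
    (∀ r ∈ Ioo 0 R, deriv G r < 0) ∧
    (∀ r ∈ Ioo 0 R,
      δ₁ * deriv (deriv G) r +
        δ₁ * κ * a * (Real.cosh (a * r) / Real.sinh (a * r)) * deriv G r = b) ∧
    G R = 0 ∧
    (∀ r ∈ Ioo 0 R, 0 < G r) := by
  have hGg : ∀ x ∈ Ioi (0:ℝ), G x = b / δ₁ *
      ((∫ t in x..R, Real.sinh (a * t) ^ κ * psiAux a κ R t)
        - psiAux a κ R x * ∫ t in x..R, Real.sinh (a * t) ^ κ) := by
    intro x hx
    rw [hG, G_eq ha hκ hR hx]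
  -- derivative of G at any positive point
  have hGd : ∀ r : ℝ, 0 < r → HasDerivAt G
      (-(b / δ₁) * Real.sinh (a * r) ^ (-κ) * ∫ t in r..R, Real.sinh (a * t) ^ κ) r := by
    intro r hr
    have h0 : (0:ℝ) < r ⊓ R := lt_inf_iff.mpr ⟨hr, hR⟩
    have hsub : uIcc r R ⊆ Ioi (0:ℝ) := fun x hx => h0.trans_le hx.1
    have hHd : HasDerivAt (fun x => ∫ t in x..R, Real.sinh (a * t) ^ κ)
        (-(Real.sinh (a * r) ^ κ)) r :=
      integral_hasDerivAt_left ((contF hκ).intervalIntegrable r R)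
        ((contF hκ).stronglyMeasurableAtFilter _ _) (contF hκ).continuousAt
    have hJd : HasDerivAt (fun x => ∫ t in x..R, Real.sinh (a * t) ^ κ * psiAux a κ R t)
        (-(Real.sinh (a * r) ^ κ * psiAux a κ R r)) r :=
      integral_hasDerivAt_left
        (((contF hκ).continuousOn.mul ((psiContOn ha hR).mono hsub)).intervalIntegrable)
        (ContinuousOn.stronglyMeasurableAtFilter isOpen_Ioi
          ((contF hκ).continuousOn.mul (psiContOn ha hR)) r hr)
        ((contF hκ).continuousAt.mul (psiHasDeriv ha hR hr).continuousAt)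
    have hgd := (hJd.sub (((psiHasDeriv (κ := κ) ha hR hr).mul hHd))).const_mul (b / δ₁)
    have hEq : G =ᶠ[nhds r] (fun x => b / δ₁ *
        ((∫ t in x..R, Real.sinh (a * t) ^ κ * psiAux a κ R t)
          - psiAux a κ R x * ∫ t in x..R, Real.sinh (a * t) ^ κ)) :=
      Filter.eventuallyEq_of_mem (isOpen_Ioi.mem_nhds hr) hGg
    have := hgd.congr_of_eventuallyEq hEq
    refine this.congr_deriv ?_
    have hS := sinh_pos' ha hr
    have h1 : Real.sinh (a * r) ^ (-κ) * Real.sinh (a * r) ^ κ = 1 := by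
      rw [← Real.rpow_add hS, neg_add_cancel, Real.rpow_zero]
    ring_nf at h1 ⊢
  have part1 : ∀ r ∈ Ioo 0 R, deriv G r =
      -(b / δ₁) * Real.sinh (a * r) ^ (-κ) * ∫ t in r..R, Real.sinh (a * t) ^ κ :=
    fun r hr => (hGd r hr.1).deriv
  have hHpos : ∀ r ∈ Ioo 0 R, 0 < ∫ t in r..R, Real.sinh (a * t) ^ κ := by
    intro r hr
    exact intervalIntegral_pos_of_pos_on ((contF hκ).intervalIntegrable r R)
      (fun x hx => Real.rpow_pos_of_pos (sinh_pos' ha (hr.1.trans hx.1)) κ) hr.2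
  refine ⟨part1, ?_, ?_, ?_, ?_⟩
  · intro r hr
    rw [part1 r hr]
    have h1 : (0:ℝ) < Real.sinh (a * r) ^ (-κ) :=
      Real.rpow_pos_of_pos (sinh_pos' ha hr.1) _
    nlinarith [mul_pos (mul_pos (div_pos hb hδ) h1) (hHpos r hr)]
  · intro r hr
    have hEq2 : deriv G =ᶠ[nhds r] (fun x =>
        -(b / δ₁) * Real.sinh (a * x) ^ (-κ) * ∫ t in x..R, Real.sinh (a * t) ^ κ) :=
      Filter.eventuallyEq_of_mem (isOpen_Ioi.mem_nhds hr.1) (fun x hx => (hGd x hx).deriv)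
    have hHd : HasDerivAt (fun x => ∫ t in x..R, Real.sinh (a * t) ^ κ)
        (-(Real.sinh (a * r) ^ κ)) r :=
      integral_hasDerivAt_left ((contF hκ).intervalIntegrable r R)
        ((contF hκ).stronglyMeasurableAtFilter _ _) (contF hκ).continuousAt
    have hax : HasDerivAt (fun x : ℝ => a * x) a r := by
      simpa using (hasDerivAt_id r).const_mul a
    have hsinh : HasDerivAt (fun x : ℝ => Real.sinh (a * x)) (Real.cosh (a * r) * a) r :=
      (Real.hasDerivAt_sinh (a * r)).comp r hax
    have hS := sinh_pos' ha hr.1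
    have hφd : HasDerivAt (fun x : ℝ => Real.sinh (a * x) ^ (-κ))
        ((Real.cosh (a * r) * a) * (-κ) * Real.sinh (a * r) ^ (-κ - 1)) r :=
      hsinh.rpow_const (Or.inl hS.ne')
    have hEd : HasDerivAt (fun x =>
        -(b / δ₁) * Real.sinh (a * x) ^ (-κ) * ∫ t in x..R, Real.sinh (a * t) ^ κ) _ r :=
      (hφd.const_mul (-(b / δ₁))).mul hHd
    rw [hEq2.deriv_eq, hEd.deriv, part1 r hr]
    have hP : (0:ℝ) < Real.sinh (a * r) ^ κ := Real.rpow_pos_of_pos hS κ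
    have hA : Real.sinh (a * r) ^ (-κ) = (Real.sinh (a * r) ^ κ)⁻¹ :=
      Real.rpow_neg hS.le κ
    have hB : Real.sinh (a * r) ^ (-κ - 1) = (Real.sinh (a * r) ^ κ * Real.sinh (a * r))⁻¹ := by
      rw [show -κ - 1 = -(κ + 1) by ring, Real.rpow_neg hS.le, Real.rpow_add hS,
        Real.rpow_one]
    rw [hA, hB]
    field_simp
    ring
  · rw [hG R, intervalIntegral.integral_same, mul_zero]
  · intro r hr
    rw [hG]
    apply mul_pos (div_pos hb hδ)
    have h0 : (0:ℝ) < r ⊓ R := lt_inf_iff.mpr ⟨hr.1, hR⟩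
    have hsub : uIcc r R ⊆ Ioi (0:ℝ) := fun x hx => h0.trans_le hx.1
    have h1 : ∀ t ∈ uIcc r R,
        (∫ s in r..t, (Real.sinh (a * t) / Real.sinh (a * s)) ^ κ)
          = Real.sinh (a * t) ^ κ * (psiAux a κ R t - psiAux a κ R r) := fun t ht =>
      inner_eq ha hR hr.1 (h0.trans_le ht.1)
    rw [intervalIntegral.integral_congr h1]
    apply intervalIntegral_pos_of_pos_on
    · exact ((contF hκ).continuousOn.mul
        (((psiContOn ha hR).mono hsub).sub continuousOn_const)).intervalIntegrable
    · intro x hx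
      have hx0 : 0 < x := hr.1.trans hx.1
      apply mul_pos (Real.rpow_pos_of_pos (sinh_pos' ha hx0) κ)
      have hdiff : psiAux a κ R x - psiAux a κ R r
          = ∫ s in r..x, Real.sinh (a * s) ^ (-κ) :=
        integral_interval_sub_left (phiIntegrable ha hR hx0) (phiIntegrable ha hR hr.1)
      rw [hdiff]
      exact intervalIntegral_pos_of_pos_on (phiIntegrable ha hr.1 hx0)
        (fun s hs => Real.rpow_pos_of_pos (sinh_pos' ha (hr.1.trans hs.1)) _) hx.1
    · exact hr.2
end

section
/- Let b > 0, R > 0, δ₁ > 0, C > 2δ₁, D := 2 − C/δ₁ (so D < 0), and let G(r) = (b/(2C)) · ( r² + (2/D − 1)·R² − (2/D)·R^{2−D}·r^D ) for r ∈ (0,R]. Then the function r ↦ 2r + G(r) is strictly convex on (0,R]; there exists a unique r₀ ∈ (0,R) with 2 + G'(r₀) = 0; this r₀ satisfies r₀ ≤ ( (b/(2C))·R^{2−D} )^{1/(1−D)} and 2r₀ + G(r₀) ≤ 2·(1 − 2/D)·r₀; consequently inf_{0 < r ≤ R} ( 2r + G(r) ) ≤ 2·(1 − 2/D)·( (b/(2C))·R^{2−D}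 )^{1/(1−D)}. -/
open Set

set_option maxHeartbeats 1000000 in
/-- Minimization of 2r + G(r) for the flat-case barrier G, used in the excess estimate. -/
theorem stmt_10 (b R δ₁ C D : ℝ) (hb : 0 < b) (hR : 0 < R) (hδ : 0 < δ₁)
    (hC : 2 * δ₁ < C) (hD : D = 2 - C / δ₁)
    (G : ℝ → ℝ)
    (hG : ∀ r : ℝ, G r = b / (2 * C) * (r ^ 2 + (2 / D - 1) * R ^ 2 - (2 / D) * R ^ (2 - D) * r ^ D)) :
    StrictConvexOn ℝ (Ioc 0 R) (fun r => 2 * r + G r) ∧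
    ∃ r₀ ∈ Ioo 0 R,
      (2 + deriv G r₀ = 0) ∧
      (∀ r ∈ Ioo 0 R, 2 + deriv G r = 0 → r = r₀) ∧
      r₀ ≤ (b / (2 * C) * R ^ (2 - D)) ^ (1 / (1 - D)) ∧
      2 * r₀ + G r₀ ≤ 2 * (1 - 2 / D) * r₀ ∧
      sInf ((fun r => 2 * r + G r) '' Ioc 0 R) ≤
        2 * (1 - 2 / D) * (b / (2 * C) * R ^ (2 - D)) ^ (1 / (1 - D)) := by
  have hGf : G = fun r : ℝ => b / (2 * C) *
      (r ^ 2 + (2 / D - 1) * R ^ 2 - (2 / D) * R ^ (2 - D) * r ^ D) := funext hG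
  subst hGf
  have hC0 : 0 < C := by linarith
  have h2D : (2 : ℝ) < C / δ₁ := (lt_div_iff₀ hδ).mpr (by linarith)
  have hDneg : D < 0 := by rw [hD]; linarith
  have hD0 : D ≠ 0 := ne_of_lt hDneg
  have h1D : (0 : ℝ) < 1 - D := by linarith
  set k := b / (2 * C) with hkdef
  have hk : 0 < k := by positivity
  set M := R ^ (2 - D) with hMdef
  have hM : 0 < M := Real.rpow_pos_of_pos hR _
  set q := 2 / D with hqdef
  have hq : q < 0 := div_neg_of_pos_of_neg (by norm_num) hDneg
  clear_value k M q
  -- derivative of G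
  have hder : ∀ r : ℝ, 0 < r →
      HasDerivAt (fun r : ℝ => k * (r ^ 2 + (q - 1) * R ^ 2 - q * M * r ^ D))
        (k * (2 * r - 2 * M * r ^ (D - 1))) r := by
    intro r hr
    have h1 : HasDerivAt (fun r : ℝ => r ^ D) (D * r ^ (D - 1)) r :=
      Real.hasDerivAt_rpow_const (Or.inl hr.ne')
    have h2 : HasDerivAt (fun r : ℝ => r ^ 2) (2 * r) r := by
      simpa using hasDerivAt_pow 2 r
    have h3 := (((h2.add_const ((q - 1) * R ^ 2)).sub (h1.const_mul (q * M))).const_mul k)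
    refine h3.congr_deriv (Eq.symm ?_)
    rw [hqdef]
    field_simp
  have hderiv : ∀ r : ℝ, 0 < r →
      deriv (fun r : ℝ => k * (r ^ 2 + (q - 1) * R ^ 2 - q * M * r ^ D)) r
        = k * (2 * r - 2 * M * r ^ (D - 1)) := fun r hr => (hder r hr).deriv
  -- the derivative of F := 2r + G r
  set φ : ℝ → ℝ := fun r => 2 + k * (2 * r - 2 * M * r ^ (D - 1)) with hφdef
  have hderF : ∀ r : ℝ, 0 < r →
      HasDerivAt (fun r : ℝ => 2 * r + k * (r ^ 2 + (q - 1) * R ^ 2 - q * M * r ^ D)) (φ r) r := by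
    intro r hr
    have := ((hasDerivAt_id r).const_mul (2 : ℝ)).add (hder r hr)
    exact this.congr_deriv (by simp [hφdef])
  -- strict monotonicity of φ on Ioo 0 R
  have hmonoφ : StrictMonoOn φ (Ioo 0 R) := by
    intro x hx y hy hxy
    have hpow : y ^ (D - 1) < x ^ (D - 1) :=
      Real.rpow_lt_rpow_of_neg hx.1 hxy (by linarith)
    have h1 : 0 < k * M := mul_pos hk hM
    simp only [hφdef]
    nlinarith [mul_pos h1 (sub_pos.mpr hpow)]
  -- strict monotonicity of deriv F on Ioo 0 R
  have hmono : StrictMonoOn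
      (deriv (fun r : ℝ => 2 * r + k * (r ^ 2 + (q - 1) * R ^ 2 - q * M * r ^ D))) (Ioo 0 R) := by
    intro x hx y hy hxy
    rw [(hderF x hx.1).deriv, (hderF y hy.1).deriv]
    exact hmonoφ hx hy hxy
  -- continuity of F on Ioc 0 R
  have hcont : ContinuousOn
      (fun r : ℝ => 2 * r + k * (r ^ 2 + (q - 1) * R ^ 2 - q * M * r ^ D)) (Ioc 0 R) := by
    apply ContinuousOn.add (continuousOn_const.mul continuousOn_id)
    apply ContinuousOn.mul continuousOn_const
    apply ContinuousOn.sub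
    · exact (continuousOn_id.pow 2).add continuousOn_const
    · exact continuousOn_const.mul
        (continuousOn_id.rpow_const (fun x hx => Or.inl (ne_of_gt hx.1)))
  have hconv : StrictConvexOn ℝ (Ioc 0 R)
      (fun r : ℝ => 2 * r + k * (r ^ 2 + (q - 1) * R ^ 2 - q * M * r ^ D)) := by
    apply StrictMonoOn.strictConvexOn_of_deriv (convex_Ioc 0 R) hcont
    rwa [interior_Ioc]
  -- find the root of φ via IVT
  set A : ℝ := (k * M / (1 + k * R)) ^ (1 / (1 - D)) with hAdef
  have hA : 0 < A := Real.rpow_pos_of_pos (by positivity) _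
  set ε : ℝ := min (R / 2) A with hεdef
  have hε : 0 < ε := lt_min (by linarith) hA
  have hεR : ε < R := lt_of_le_of_lt (min_le_left _ _) (by linarith)
  have hεA : ε ≤ A := min_le_right _ _
  have hεhalf : ε ≤ R / 2 := min_le_left _ _
  clear_value A ε
  -- φ ε ≤ 0
  have hφε : φ ε ≤ 0 := by
    have h1 : ε ^ (1 - D) ≤ k * M / (1 + k * R) := by
      have h2 : ε ^ (1 - D) ≤ A ^ (1 - D) := Real.rpow_le_rpow hε.le hεA h1D.le
      have h3 : A ^ (1 - D) = k * M / (1 + k * R) := by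
        rw [hAdef, ← Real.rpow_mul (by positivity),
          one_div_mul_cancel (by linarith : (1:ℝ) - D ≠ 0), Real.rpow_one]
      rw [h3] at h2; exact h2
    have h6 : 0 < ε ^ (1 - D) := Real.rpow_pos_of_pos hε _
    have h1' : ε ^ (1 - D) * (1 + k * R) ≤ k * M :=
      (le_div_iff₀ (by positivity : (0:ℝ) < 1 + k * R)).mp h1
    have h4 : (1 + k * R) / (k * M) ≤ ε ^ (D - 1) := by
      have h5 : ε ^ (D - 1) = (ε ^ (1 - D))⁻¹ := by
        rw [← Real.rpow_neg hε.le]; ring_nf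
      rw [h5, div_le_iff₀ (by positivity : (0:ℝ) < k * M), inv_mul_eq_div, le_div_iff₀ h6]
      nlinarith [h1']
    have h7 : 2 * (1 + k * R) ≤ 2 * (k * M) * ε ^ (D - 1) := by
      have := mul_le_mul_of_nonneg_left h4 (by positivity : (0:ℝ) ≤ 2 * (k * M))
      calc 2 * (1 + k * R) = 2 * (k * M) * ((1 + k * R) / (k * M)) := by
            field_simp
        _ ≤ 2 * (k * M) * ε ^ (D - 1) := this
    simp only [hφdef]
    nlinarith [mul_le_mul_of_nonneg_left hεhalf hk.le]
  have hφR : φ R = 2 := by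
    have hMR : M * R ^ (D - 1) = R := by
      rw [hMdef, ← Real.rpow_add hR]
      norm_num
    simp only [hφdef]
    rw [show 2 * R - 2 * M * R ^ (D - 1) = 2 * R - 2 * (M * R ^ (D - 1)) by ring, hMR]
    ring
  have hcontφ : ContinuousOn φ (Icc ε R) := by
    apply ContinuousOn.add continuousOn_const
    apply ContinuousOn.mul continuousOn_const
    apply ContinuousOn.sub (continuousOn_const.mul continuousOn_id)
    exact (continuousOn_const.mul
      (continuousOn_id.rpow_const (fun x hx => Or.inl (ne_of_gt (lt_of_lt_of_le hε hx.1)))))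
  have hIVT : (0 : ℝ) ∈ φ '' Icc ε R := by
    apply intermediate_value_Icc hεR.le hcontφ
    rw [hφR]
    exact ⟨hφε, by norm_num⟩
  obtain ⟨r₀, hr₀mem, hr₀root⟩ := hIVT
  have hr₀pos : 0 < r₀ := lt_of_lt_of_le hε hr₀mem.1
  have hr₀ltR : r₀ < R := by
    rcases lt_or_eq_of_le hr₀mem.2 with h | h
    · exact h
    · exfalso; rw [h, hφR] at hr₀root; norm_num at hr₀root
  have hr₀Ioo : r₀ ∈ Ioo 0 R := ⟨hr₀pos, hr₀ltR⟩
  -- key identity: k * M * r₀ ^ (D - 1) = 1 + k * r₀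
  have hkey1 : k * M * r₀ ^ (D - 1) = 1 + k * r₀ := by
    have h := hr₀root
    simp only [hφdef] at h
    have hp : (0:ℝ) < r₀ ^ (D - 1) := Real.rpow_pos_of_pos hr₀pos _
    linarith [h]
  -- r₀ ^ (1 - D) ≤ k * M
  have hbound1 : r₀ ^ (1 - D) ≤ k * M := by
    have h1 : (1 : ℝ) ≤ k * M * r₀ ^ (D - 1) := by
      rw [hkey1]; exact le_add_of_nonneg_right (mul_pos hk hr₀pos).le
    have h2 : r₀ ^ (D - 1) * r₀ ^ (1 - D) = 1 := by
      rw [← Real.rpow_add hr₀pos]; norm_num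
    calc r₀ ^ (1 - D) = 1 * r₀ ^ (1 - D) := by ring
      _ ≤ (k * M * r₀ ^ (D - 1)) * r₀ ^ (1 - D) := by
          apply mul_le_mul_of_nonneg_right h1 (Real.rpow_pos_of_pos hr₀pos _).le
      _ = k * M * (r₀ ^ (D - 1) * r₀ ^ (1 - D)) := by ring
      _ = k * M := by rw [h2]; ring
  have hr₀le : r₀ ≤ (k * M) ^ (1 / (1 - D)) := by
    have h1 : (r₀ ^ (1 - D)) ^ (1 / (1 - D)) ≤ (k * M) ^ (1 / (1 - D)) :=
      Real.rpow_le_rpow (Real.rpow_pos_of_pos hr₀pos _).le hbound1 (by positivity)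
    rwa [← Real.rpow_mul hr₀pos.le, mul_one_div_cancel (by linarith : (1:ℝ) - D ≠ 0),
      Real.rpow_one] at h1
  -- key identity 2: k * M * r₀ ^ D = (1 + k * r₀) * r₀
  have hkey2 : k * M * r₀ ^ D = (1 + k * r₀) * r₀ := by
    have h2 : r₀ ^ D = r₀ ^ (D - 1) * r₀ := by
      rw [← Real.rpow_add_one hr₀pos.ne' (D - 1)]; norm_num
    rw [h2, ← hkey1]; ring
  -- value bound
  have hval : 2 * r₀ + k * (r₀ ^ 2 + (q - 1) * R ^ 2 - q * M * r₀ ^ D) ≤ 2 * (1 - q) * r₀ := by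
    have h4 : k * (r₀ ^ 2 + (q - 1) * R ^ 2 - q * M * r₀ ^ D)
        = k * r₀ ^ 2 + k * (q - 1) * R ^ 2 - q * ((1 + k * r₀) * r₀) := by
      rw [← hkey2]; ring
    have h1 : 0 ≤ k * (1 - q) * (R ^ 2 - r₀ ^ 2) :=
      mul_nonneg (mul_nonneg hk.le (by linarith))
        (sub_nonneg.mpr (pow_le_pow_left₀ hr₀pos.le hr₀ltR.le 2))
    have h2 : q * r₀ ≤ 0 := mul_nonpos_of_nonpos_of_nonneg hq.le hr₀pos.le
    rw [h4]
    linarith [h1, h2]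
  -- uniqueness
  have huniq : ∀ r ∈ Ioo 0 R,
      2 + deriv (fun r : ℝ => k * (r ^ 2 + (q - 1) * R ^ 2 - q * M * r ^ D)) r = 0 → r = r₀ := by
    intro r hr hroot
    rw [hderiv r hr.1] at hroot
    have h0 : φ r = 0 := by simp only [hφdef]; linarith [hroot]
    exact hmonoφ.injOn hr hr₀Ioo (h0.trans hr₀root.symm)
  -- sInf bound
  have hmemimg : (2 * r₀ + k * (r₀ ^ 2 + (q - 1) * R ^ 2 - q * M * r₀ ^ D)) ∈
      (fun r : ℝ => 2 * r + k * (r ^ 2 + (q - 1) * R ^ 2 - q * M * r ^ D)) '' Ioc 0 R :=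
    ⟨r₀, ⟨hr₀pos, hr₀ltR.le⟩, rfl⟩
  have hbdd : BddBelow
      ((fun r : ℝ => 2 * r + k * (r ^ 2 + (q - 1) * R ^ 2 - q * M * r ^ D)) '' Ioc 0 R) := by
    refine ⟨k * (q - 1) * R ^ 2, ?_⟩
    rintro x ⟨r, hr, rfl⟩
    show k * (q - 1) * R ^ 2 ≤ 2 * r + k * (r ^ 2 + (q - 1) * R ^ 2 - q * M * r ^ D)
    have hrp : 0 < r := hr.1
    have h1 : 0 < r ^ D := Real.rpow_pos_of_pos hrp _
    have h2 : 0 < M * r ^ D := mul_pos hM h1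
    nlinarith [mul_pos hk h2, mul_pos hk (mul_pos hrp hrp)]
  have hstep : sInf ((fun r : ℝ => 2 * r + k * (r ^ 2 + (q - 1) * R ^ 2 - q * M * r ^ D)) ''
      Ioc 0 R) ≤ 2 * r₀ + k * (r₀ ^ 2 + (q - 1) * R ^ 2 - q * M * r₀ ^ D) :=
    csInf_le hbdd hmemimg
  have hlast : 2 * (1 - q) * r₀ ≤ 2 * (1 - q) * (k * M) ^ (1 / (1 - D)) :=
    mul_le_mul_of_nonneg_left hr₀le (by linarith)
  have hsinf : sInf ((fun r : ℝ => 2 * r + k * (r ^ 2 + (q - 1) * R ^ 2 - q * M * r ^ D)) ''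
      Ioc 0 R) ≤ 2 * (1 - q) * (k * M) ^ (1 / (1 - D)) :=
    le_trans hstep (le_trans hval hlast)
  refine ⟨hconv, r₀, hr₀Ioo, ?_, huniq, hr₀le, hval, hsinf⟩
  rw [hderiv r₀ hr₀pos]
  simpa only [hφdef] using hr₀root
end

section
/- Let m > 1 be a real number and let α, β, r > 0. Then ∫₀^{α·r} (sinh(β·t))^{m−1} dt ≤ (2m/(m−1)) · (β·r)^{−m} · exp(α·(m−1)·β·r) · ∫₀^{r} (sinh(β·t))^{m−1} dt. -/
/-- Ratio estimate for volumes of balls in hyperbolic model spaces, used to bound the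
number of ends. -/
theorem stmt_11 (m α β r : ℝ) (hm : 1 < m) (hα : 0 < α) (hβ : 0 < β) (hr : 0 < r) :
    (∫ t in (0:ℝ)..(α * r), Real.sinh (β * t) ^ (m - 1)) ≤
      (2 * m / (m - 1)) * (β * r) ^ (-m) * Real.exp (α * (m - 1) * β * r) *
        ∫ t in (0:ℝ)..r, Real.sinh (β * t) ^ (m - 1) := by
  have hm1 : (0:ℝ) < m - 1 := by linarith
  have hβr : 0 < β * r := mul_pos hβ hr
  set c : ℝ := (m - 1) * β with hcdef
  have hc : 0 < c := mul_pos hm1 hβ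
  have hαr : 0 < α * r := mul_pos hα hr
  -- continuity of the integrands
  have hcont : Continuous fun t : ℝ => Real.sinh (β * t) ^ (m - 1) :=
    (Real.continuous_sinh.comp (continuous_const.mul continuous_id)).rpow_const
      fun x => Or.inr hm1.le
  have hcont2 : Continuous fun t : ℝ => (β * t) ^ (m - 1) :=
    (continuous_const.mul continuous_id).rpow_const fun x => Or.inr hm1.le
  have hcexp : Continuous fun t : ℝ => Real.exp (c * t) :=
    Real.continuous_exp.comp (continuous_const.mul continuous_id)
  -- sinh x ≤ exp x
  have hsinh_exp : ∀ x : ℝ, Real.sinh x ≤ Real.exp x := by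
    intro x
    rw [Real.sinh_eq]
    nlinarith [Real.exp_pos (-x), Real.exp_pos x]
  -- x ≤ sinh x for x ≥ 0
  have hself_sinh : ∀ x : ℝ, 0 ≤ x → x ≤ Real.sinh x := by
    intro x hx
    rcases eq_or_lt_of_le hx with h | h
    · simp [← h]
    · exact (Real.self_lt_sinh_iff.mpr h).le
  -- Step 1 : upper bound for integral over [0, αr]
  have step1 : (∫ t in (0:ℝ)..(α * r), Real.sinh (β * t) ^ (m - 1)) ≤
      ∫ t in (0:ℝ)..(α * r), Real.exp (c * t) := by
    apply intervalIntegral.integral_mono_on hαr.le (hcont.intervalIntegrable _ _)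
      (hcexp.intervalIntegrable _ _)
    intro t ht
    calc Real.sinh (β * t) ^ (m - 1) ≤ Real.exp (β * t) ^ (m - 1) :=
          Real.rpow_le_rpow (Real.sinh_nonneg_iff.mpr (mul_nonneg hβ.le ht.1))
            (hsinh_exp _) hm1.le
      _ = Real.exp (c * t) := by rw [← Real.exp_mul, hcdef]; ring_nf
  -- Step 2 : compute the exponential integral
  have step2 : (∫ t in (0:ℝ)..(α * r), Real.exp (c * t)) =
      (Real.exp (c * (α * r)) - 1) / c := by
    have hderiv : ∀ t ∈ Set.uIcc (0:ℝ) (α * r),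
        HasDerivAt (fun t : ℝ => Real.exp (c * t) / c) (Real.exp (c * t)) t := by
      intro t _
      have h1 : HasDerivAt (fun t : ℝ => c * t) c t := by
        simpa using (hasDerivAt_id t).const_mul c
      have h2 := (h1.exp).div_const c
      rw [mul_div_cancel_right₀ _ hc.ne'] at h2
      exact h2
    rw [intervalIntegral.integral_eq_sub_of_hasDerivAt hderiv
      (hcexp.intervalIntegrable _ _)]
    simp [sub_div]
  -- Step 3 : lower bound for integral over [0, r]
  have step3 : β ^ (m - 1) * r ^ m / m ≤
      ∫ t in (0:ℝ)..r, Real.sinh (β * t) ^ (m - 1) := by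
    have heq : (∫ t in (0:ℝ)..r, (β * t) ^ (m - 1)) = β ^ (m - 1) * r ^ m / m := by
      have hEq : Set.EqOn (fun t : ℝ => (β * t) ^ (m - 1))
          (fun t : ℝ => β ^ (m - 1) * t ^ (m - 1)) (Set.uIcc 0 r) := by
        intro t ht
        rw [Set.uIcc_of_le hr.le] at ht
        simp only
        rw [Real.mul_rpow hβ.le ht.1]
      rw [intervalIntegral.integral_congr hEq, intervalIntegral.integral_const_mul,
        integral_rpow (Or.inl (by linarith))]
      rw [sub_add_cancel, Real.zero_rpow (by positivity : m ≠ 0)]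
      ring
    rw [← heq]
    apply intervalIntegral.integral_mono_on hr.le (hcont2.intervalIntegrable _ _)
      (hcont.intervalIntegrable _ _)
    intro t ht
    exact Real.rpow_le_rpow (mul_nonneg hβ.le ht.1)
      (hself_sinh _ (mul_nonneg hβ.le ht.1)) hm1.le
  -- Step 4 : the key arithmetic inequality
  have hexpeq : Real.exp (α * (m - 1) * β * r) = Real.exp (c * (α * r)) := by
    rw [hcdef]; ring_nf
  have hC : (0:ℝ) ≤ 2 * m / (m - 1) * (β * r) ^ (-m) * Real.exp (α * (m - 1) * β * r) := by
    positivity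
  have key : (Real.exp (c * (α * r)) - 1) / c ≤
      2 * m / (m - 1) * (β * r) ^ (-m) * Real.exp (α * (m - 1) * β * r) *
        (β ^ (m - 1) * r ^ m / m) := by
    rw [hexpeq]
    have hrw : 2 * m / (m - 1) * (β * r) ^ (-m) * Real.exp (c * (α * r)) *
        (β ^ (m - 1) * r ^ m / m) = 2 * Real.exp (c * (α * r)) / c := by
      rw [Real.rpow_neg hβr.le, Real.mul_rpow hβ.le hr.le,
        Real.rpow_sub hβ, Real.rpow_one, hcdef]
      have hβm : (0:ℝ) < β ^ m := Real.rpow_pos_of_pos hβ m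
      have hrm : (0:ℝ) < r ^ m := Real.rpow_pos_of_pos hr m
      field_simp
    rw [hrw]
    have hE : 0 < Real.exp (c * (α * r)) := Real.exp_pos _
    rw [div_le_div_iff₀ hc hc]
    nlinarith
  calc (∫ t in (0:ℝ)..(α * r), Real.sinh (β * t) ^ (m - 1))
      ≤ (Real.exp (c * (α * r)) - 1) / c := step1.trans (le_of_eq step2)
    _ ≤ 2 * m / (m - 1) * (β * r) ^ (-m) * Real.exp (α * (m - 1) * β * r) *
        (β ^ (m - 1) * r ^ m / m) := key
    _ ≤ 2 * m / (m - 1) * (β * r) ^ (-m) * Real.exp (α * (m - 1) * β * r) *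
        ∫ t in (0:ℝ)..r, Real.sinh (β * t) ^ (m - 1) :=
        mul_le_mul_of_nonneg_left step3 hC
end
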